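/- Let G be a topological group acting on X, and let K₁ ⊆ K₂ be symmetric neighborhoods of the identity with K₁² ⊆ K₂. If A ⊆ G is infinite with a cluster point c ∈ G, and the points {a·x : a ∈ A} are pairwise distinct and lie in a K₂-discrete set Y, then a contradiction follows; hence in a Hausdorff group, any subset of a K₂-discrete set contained in C·x for compact C ⊆ G is finite. -/

import Mathlib

open scoped Pointwise

/-- Let `G` act on `X`, and let `K₁ ⊆ K₂` be symmetric neighborhoods of the identity
with `K₁² ⊆ K₂`. If `A ⊆ G` is infinite with a cluster point `c`, and `{a·x : a ∈ A}`
are pairwise distinct points of a `K₂`-discrete set `Y`, a contradiction follows; hence,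
in a Hausdorff group, any subset of a `K₂`-discrete set contained in `C·x` for compact
`C` is finite. -/
theorem cluster_point_contradiction_and_finiteness
    {G X : Type*} [Group G] [TopologicalSpace G] [IsTopologicalGroup G]
    [MulAction G X]
    (K₁ K₂ : Set G) (hK₁nhds : K₁ ∈ nhds (1 : G)) (hK₂nhds : K₂ ∈ nhds (1 : G))
    (hK₁symm : K₁⁻¹ = K₁) (hK₂symm : K₂⁻¹ = K₂)
    (hK₁sub : K₁ ⊆ K₂) (hsq : K₁ * K₁ ⊆ K₂)
    (x : X) (Y : Set X)
    (hYdisc : ∀ y₁ ∈ Y, ∀ y₂ ∈ Y, y₁ ≠ y₂ → ∀ k ∈ K₂, k • y₁ ≠ y₂) :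
    ((∀ (A : Set G) (c : G), A.Infinite →
        (∀ U ∈ nhds c, (A ∩ U).Infinite) →
        Set.InjOn (· • x) A → (· • x) '' A ⊆ Y → False)) ∧
    (T2Space G → ∀ C : Set G, IsCompact C →
      ∀ S : Set X, S ⊆ Y → S ⊆ (· • x) '' C → S.Finite) := by
  have part1 : (∀ (A : Set G) (c : G), A.Infinite →
        (∀ U ∈ nhds c, (A ∩ U).Infinite) →
        Set.InjOn (· • x) A → (· • x) '' A ⊆ Y → False) := by
    intro A c _hAinf hclus hinj himg
    set U : Set G := (fun g => g * c⁻¹) ⁻¹' K₁ with hU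
    have hUnhds : U ∈ nhds c := by
      have hcont : ContinuousAt (fun g : G => g * c⁻¹) c := by fun_prop
      exact hcont.preimage_mem_nhds (by simpa using hK₁nhds)
    have hAU := hclus U hUnhds
    obtain ⟨a₁, ha₁⟩ := hAU.nonempty
    obtain ⟨a₂, ⟨ha₂A, ha₂U⟩, hne⟩ := (hAU.diff (Set.finite_singleton a₁)).nonempty
    have hne' : a₂ ≠ a₁ := by simpa using hne
    have hk : a₂ * a₁⁻¹ ∈ K₂ := by
      have h1 : a₂ * c⁻¹ ∈ K₁ := ha₂U
      have h2 : (a₁ * c⁻¹)⁻¹ ∈ K₁ := by rw [← hK₁symm]; exact Set.inv_mem_inv.mpr ha₁.2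
      have : (a₂ * c⁻¹) * (a₁ * c⁻¹)⁻¹ = a₂ * a₁⁻¹ := by group
      rw [← this]
      exact hsq (Set.mul_mem_mul h1 h2)
    have hy₁ : a₁ • x ∈ Y := himg ⟨a₁, ha₁.1, rfl⟩
    have hy₂ : a₂ • x ∈ Y := himg ⟨a₂, ha₂A, rfl⟩
    have hyne : a₁ • x ≠ a₂ • x := fun h => hne' (hinj ha₂A ha₁.1 h.symm)
    exact hYdisc _ hy₁ _ hy₂ hyne _ hk (by rw [smul_smul]; group)
  refine ⟨part1, ?_⟩
  intro _ C hC S hSY hSC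
  by_contra hSinf
  replace hSinf : S.Infinite := hSinf
  -- choose preimages
  have hchoice : ∀ s ∈ S, ∃ a ∈ C, a • x = s := by
    intro s hs
    obtain ⟨a, ha, hax⟩ := hSC hs
    exact ⟨a, ha, hax⟩
  choose g hgC hgx using hchoice
  classical
  set g' : X → G := fun s => if h : s ∈ S then g s h else 1 with hg'
  have hg'C : ∀ s ∈ S, g' s ∈ C := fun s hs => by simp [hg', hs, hgC]
  have hg'x : ∀ s ∈ S, g' s • x = s := fun s hs => by simp [hg', hs, hgx]
  set A : Set G := g' '' S with hA
  have hg'inj : Set.InjOn g' S := by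
    intro s₁ h₁ s₂ h₂ h
    rw [← hg'x s₁ h₁, ← hg'x s₂ h₂, h]
  have hAinf : A.Infinite := hSinf.image hg'inj
  have hAC : A ⊆ C := by rintro a ⟨s, hs, rfl⟩; exact hg'C s hs
  have hinj : Set.InjOn (· • x) A := by
    rintro a₁ ⟨s₁, hs₁, rfl⟩ a₂ ⟨s₂, hs₂, rfl⟩ h
    simp only [hg'x s₁ hs₁, hg'x s₂ hs₂] at h
    rw [h]
  have himg : (· • x) '' A ⊆ Y := by
    rintro y ⟨a, ⟨s, hs, rfl⟩, rfl⟩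
    show g' s • x ∈ Y
    rw [hg'x s hs]; exact hSY hs
  -- get cluster point
  obtain ⟨f, hf⟩ := hAinf.natEmbedding
  -- get cluster point of A in C via compactness
  let f : ℕ → G := fun n => (Set.Infinite.natEmbedding A hAinf n : G)
  have hfA : ∀ n, f n ∈ A := fun n => (Set.Infinite.natEmbedding A hAinf n).2
  have hfinj : Function.Injective f := fun m n h =>
    (Set.Infinite.natEmbedding A hAinf).injective (Subtype.ext h)
  have hle : Filter.map f Filter.atTop ≤ Filter.principal C := by
    rw [Filter.le_principal_iff, Filter.mem_map]
    exact Filter.Eventually.of_forall fun n => hAC (hfA n)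
  obtain ⟨c, _hcC, hc⟩ := hC.exists_mapClusterPt hle
  have hclus : ∀ U ∈ nhds c, (A ∩ U).Infinite := by
    intro U hU
    have hfreq : ∃ᶠ n in Filter.atTop, f n ∈ U := (mapClusterPt_iff_frequently.mp hc) U hU
    have hinf : {n : ℕ | f n ∈ U}.Infinite := Nat.frequently_atTop_iff_infinite.mp hfreq
    have : f '' {n : ℕ | f n ∈ U} ⊆ A ∩ U := by
      rintro _ ⟨n, hn, rfl⟩; exact ⟨hfA n, hn⟩
    exact (hinf.image (hfinj.injOn)).mono this
  exact part1 A c hAinf hclus hinj himg
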